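/- Let p be an odd prime. Then any two vertices of the modified Platonic graph Π_p' are joined by a path of length at most 3 inside Π_p'; that is, the diameter of Π_p' is at most 3. -/

import Mathlib

/-- Pairs `(λ, μ) ∈ (ℤ/N)²` with `gcd(λ, μ, N) = 1`. -/
abbrev PlatonicPair (N : ℕ) : Type :=
  {x : ZMod N × ZMod N // Nat.gcd (Nat.gcd x.1.val x.2.val) N = 1}

/-- Identify `(λ,μ)` with `(-λ,-μ)`. -/
instance platonicSetoid (N : ℕ) : Setoid (PlatonicPair N) where
  r x y := y.val = x.val ∨ y.val = -x.val
  iseqv := by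
    refine ⟨fun _ => Or.inl rfl, ?_, ?_⟩
    · rintro x y (h | h)
      · exact Or.inl h.symm
      · right; rw [h, neg_neg]
    · rintro x y z (h1 | h1) (h2 | h2)
      · exact Or.inl (h2.trans h1)
      · right; rw [h2, h1]
      · right; rw [h2, h1]
      · left; rw [h2, h1, neg_neg]

/-- Vertices of the Platonic graph: classes `[λ,μ] = {(λ,μ), (-λ,-μ)}`. -/
abbrev PlatonicVertex (N : ℕ) : Type := Quotient (platonicSetoid N)

/-- The Platonic graph `Π_N`: distinct classes `[λ,μ]`, `[ν,ω]` are adjacent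
iff `λω - μν = ±1` in `ℤ/N`. -/
def Platonic (N : ℕ) : SimpleGraph (PlatonicVertex N) where
  Adj a b := a ≠ b ∧ ∃ x y : PlatonicPair N, ⟦x⟧ = a ∧ ⟦y⟧ = b ∧
    (x.val.1 * y.val.2 - x.val.2 * y.val.1 = 1 ∨
     x.val.1 * y.val.2 - x.val.2 * y.val.1 = -1)
  symm := by
    constructor
    rintro a b ⟨hne, x, y, hx, hy, hdet⟩
    refine ⟨hne.symm, y, x, hy, hx, ?_⟩
    rcases hdet with h | h
    · right; linear_combination -h
    · left; linear_combination -h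
  loopless := ⟨fun a h => h.1 rfl⟩

instance platonicDecRel (N : ℕ) :
    DecidableRel (α := PlatonicPair N) (· ≈ ·) := fun x y =>
  inferInstanceAs (Decidable (y.val = x.val ∨ y.val = -x.val))

instance (N : ℕ) : DecidableEq (PlatonicVertex N) :=
  @Quotient.decidableEq _ _ (platonicDecRel N)

instance (N : ℕ) [NeZero N] : Fintype (PlatonicVertex N) :=
  Quotient.fintype _

instance platonicAdjDec (N : ℕ) [NeZero N] : DecidableRel (Platonic N).Adj := fun a b =>
  inferInstanceAs (Decidable (a ≠ b ∧ ∃ x y : PlatonicPair N, ⟦x⟧ = a ∧ ⟦y⟧ = b ∧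
    (x.val.1 * y.val.2 - x.val.2 * y.val.1 = 1 ∨
     x.val.1 * y.val.2 - x.val.2 * y.val.1 = -1)))

/-- The class of `(λ,μ)` has nonvanishing second coordinate. -/
def secondNZ (N : ℕ) (v : PlatonicVertex N) : Prop :=
  ∀ x : PlatonicPair N, ⟦x⟧ = v → x.val.2 ≠ 0

instance (N : ℕ) [NeZero N] : DecidablePred (secondNZ N) := fun _ =>
  Fintype.decidableForallFintype

/-- The modified Platonic graph `Π_p'`: induced subgraph of `Π_p` on the classes
`[λ,μ]` with `μ ≠ 0`. -/
def ModPlatonic (N : ℕ) : SimpleGraph {v : PlatonicVertex N | secondNZ N v} :=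
  SimpleGraph.induce {v : PlatonicVertex N | secondNZ N v} (Platonic N)

instance (N : ℕ) [NeZero N] : DecidableRel (ModPlatonic N).Adj := fun a b =>
  inferInstanceAs (Decidable ((Platonic N).Adj a b))


section helpers
variable {p : ℕ} [Fact p.Prime]

lemma gcdCond {x y : ZMod p} (hy : y ≠ 0) : Nat.gcd (Nat.gcd x.val y.val) p = 1 := by
  have hp := Fact.out (p := p.Prime)
  haveI : NeZero p := ⟨hp.pos.ne'⟩
  rw [Nat.gcd_comm]
  refine (hp.coprime_iff_not_dvd.mpr ?_)
  intro h
  have h2 : p ∣ y.val := h.trans (Nat.gcd_dvd_right _ _)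
  have h3 : y.val ≠ 0 := fun h0 => hy ((ZMod.val_eq_zero y).mp h0)
  exact absurd (Nat.le_of_dvd (Nat.pos_of_ne_zero h3) h2) (not_le.mpr (ZMod.val_lt y))

def mkPair (x y : ZMod p) (hy : y ≠ 0) : PlatonicPair p := ⟨(x, y), gcdCond hy⟩

end helpers
section helpers2
variable {p : ℕ} [Fact p.Prime]

lemma secondNZ_mk {x y : ZMod p} (hy : y ≠ 0) :
    secondNZ p (⟦mkPair x y hy⟧ : PlatonicVertex p) := by
  intro z hz
  rcases Quotient.exact hz with h | h
  · rw [show z.val = (x, y) from h.symm]; exact hy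
  · have h2 : y = -z.val.2 := congrArg Prod.snd h
    have : z.val.2 = -y := by rw [h2, neg_neg]
    rw [this]; exact neg_ne_zero.mpr hy

lemma platonic_adj {x y : PlatonicPair p}
    (h : x.val.1 * y.val.2 - x.val.2 * y.val.1 = 1 ∨
         x.val.1 * y.val.2 - x.val.2 * y.val.1 = -1) :
    (Platonic p).Adj ⟦x⟧ ⟦y⟧ := by
  show (⟦x⟧ : PlatonicVertex p) ≠ ⟦y⟧ ∧ _
  refine ⟨?_, x, y, rfl, rfl, h⟩
  intro heq
  have h0 : x.val.1 * y.val.2 - x.val.2 * y.val.1 = 0 := by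
    rcases Quotient.exact heq with h' | h'
    · rw [show y.val = x.val from h']; ring
    · rw [show y.val = -x.val from h']; simp; ring
  rcases h with h | h <;> rw [h0] at h
  · exact one_ne_zero h.symm
  · exact one_ne_zero (neg_eq_zero.mp h.symm)

end helpers2

theorem modPlatonic_diam_le_three (p : ℕ) (hp : p.Prime) (hodd : Odd p)
    (a b : {v : PlatonicVertex p | secondNZ p v}) :
    ∃ w : (ModPlatonic p).Walk a b, w.length ≤ 3 := by
  haveI : Fact p.Prime := ⟨hp⟩
  haveI : NeZero p := ⟨hp.pos.ne'⟩
  have h2 : (2 : ZMod p) ≠ 0 := by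
    have : ¬ ((2:ℕ) : ZMod p) = 0 := by
      rw [ZMod.natCast_eq_zero_iff]
      intro h
      rcases (Nat.prime_two.eq_one_or_self_of_dvd p h) with h' | h'
      · exact hp.one_lt.ne' h'
      · rw [h'] at hodd; exact (Nat.not_odd_iff_even.mpr even_two) hodd
    simpa using this
  obtain ⟨xa, hxa⟩ := Quotient.exists_rep (a : PlatonicVertex p)
  obtain ⟨xb, hxb⟩ := Quotient.exists_rep (b : PlatonicVertex p)
  obtain ⟨l, m, n, o, hl, hm0, hn, ho0⟩ :
      ∃ l m n o : ZMod p, xa.val.1 = l ∧ xa.val.2 = m ∧ xb.val.1 = n ∧ xb.val.2 = o :=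
    ⟨_, _, _, _, rfl, rfl, rfl, rfl⟩
  have hm : m ≠ 0 := hm0 ▸ a.2 xa hxa
  have ho : o ≠ 0 := ho0 ▸ b.2 xb hxb
  set s : ZMod p := if o = l * o - n * m then -1 else 1 with hs
  set r : ZMod p := if o = -1 then -1 else 1 with hr
  have hss : s = 1 ∨ s = -1 := by rw [hs]; split <;> simp
  have hrr : r = 1 ∨ r = -1 := by rw [hr]; split <;> simp
  have hd : (l * o - n * m) - s * o ≠ 0 := by
    rw [hs]; split
    · rename_i h'
      rw [← h']
      intro hc
      exact mul_ne_zero h2 ho (by linear_combination hc)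
    · rename_i h'
      intro hc
      exact h' (by linear_combination -hc)
  have hnum : r * o + 1 ≠ 0 := by
    rw [hr]; split
    · rename_i h'
      rw [h']
      intro hc; exact h2 (by linear_combination hc)
    · rename_i h'
      intro hc; exact h' (by linear_combination hc)
  have hδ : (r * o + 1) * m * ((l * o - n * m) - s * o)⁻¹ ≠ 0 :=
    mul_ne_zero (mul_ne_zero hnum hm) (inv_ne_zero hd)
  have h1ne : (1 : ZMod p) ≠ 0 := one_ne_zero
  let v1 : {v : PlatonicVertex p | secondNZ p v} :=
    ⟨⟦mkPair ((l - s) * m⁻¹) 1 h1ne⟧, secondNZ_mk h1ne⟩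
  let v2 : {v : PlatonicVertex p | secondNZ p v} :=
    ⟨⟦mkPair ((n * ((r * o + 1) * m * ((l * o - n * m) - s * o)⁻¹) + 1) * o⁻¹)
        ((r * o + 1) * m * ((l * o - n * m) - s * o)⁻¹) hδ⟧, secondNZ_mk hδ⟩
  have e1 : (ModPlatonic p).Adj a v1 := by
    show (Platonic p).Adj (a : PlatonicVertex p) ⟦mkPair ((l - s) * m⁻¹) 1 h1ne⟧
    rw [← hxa]
    apply platonic_adj
    show xa.val.1 * 1 - xa.val.2 * ((l - s) * m⁻¹) = 1 ∨
         xa.val.1 * 1 - xa.val.2 * ((l - s) * m⁻¹) = -1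
    rw [hl, hm0]
    have : l * 1 - m * ((l - s) * m⁻¹) = s := by field_simp; ring
    rw [this]; exact hss
  have e2 : (ModPlatonic p).Adj v1 v2 := by
    apply platonic_adj
    show ((l - s) * m⁻¹) * ((r * o + 1) * m * ((l * o - n * m) - s * o)⁻¹)
        - 1 * ((n * ((r * o + 1) * m * ((l * o - n * m) - s * o)⁻¹) + 1) * o⁻¹) = 1 ∨
      ((l - s) * m⁻¹) * ((r * o + 1) * m * ((l * o - n * m) - s * o)⁻¹)
        - 1 * ((n * ((r * o + 1) * m * ((l * o - n * m) - s * o)⁻¹) + 1) * o⁻¹) = -1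
    have : ((l - s) * m⁻¹) * ((r * o + 1) * m * ((l * o - n * m) - s * o)⁻¹)
        - 1 * ((n * ((r * o + 1) * m * ((l * o - n * m) - s * o)⁻¹) + 1) * o⁻¹) = r := by
      linear_combination (l - s) * (r * o + 1) * ((l * o - n * m) - s * o)⁻¹ * mul_inv_cancel₀ hm
        + (r * o + 1) * o⁻¹ * mul_inv_cancel₀ hd
        + (r - (r * o + 1) * ((l * o - n * m) - s * o)⁻¹ * (l - s)) * mul_inv_cancel₀ ho
    rw [this]; exact hrr
  have e3 : (ModPlatonic p).Adj v2 b := by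
    show (Platonic p).Adj
      (⟦mkPair ((n * ((r * o + 1) * m * ((l * o - n * m) - s * o)⁻¹) + 1) * o⁻¹)
        ((r * o + 1) * m * ((l * o - n * m) - s * o)⁻¹) hδ⟧ : PlatonicVertex p)
      (b : PlatonicVertex p)
    rw [← hxb]
    apply platonic_adj
    left
    show ((n * ((r * o + 1) * m * ((l * o - n * m) - s * o)⁻¹) + 1) * o⁻¹) * xb.val.2
        - ((r * o + 1) * m * ((l * o - n * m) - s * o)⁻¹) * xb.val.1 = 1
    rw [hn, ho0]
    field_simp
    ring
  exact ⟨SimpleGraph.Walk.cons e1 (SimpleGraph.Walk.cons e2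
    (SimpleGraph.Walk.cons e3 SimpleGraph.Walk.nil)), by simp⟩
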